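/- Let G, H, K be groupoids, p : K ⥤ G a functor, and q : K ⥤ H a finite weak cover. For objects η of H and γ of G define X(η, γ) as the coend over K of κ ↦ Hom_G(p κ, γ) × Hom_H(η, q κ): the quotient of Σ κ, Hom_G(p κ, γ) × Hom_H(η, q κ) by the equivalence relation generated by (g ∘ p(k), h) ~ (g, q(k) ∘ h) for all k : κ̄ → κ, g : p κ → γ, h : η → q κ̄. Then for every object η of H, the G-set γ ↦ X(η, γ) (with g' : γ → γ' acting by postcomposition on the G-factor) is free and finite. -/

import Mathlib

open CategoryTheory Opposite

universe w v₁ v₂ v₃ u₁ u₂ u₃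

/-- Freeness for a `Type`-valued functor: all orbit maps `g ↦ g • x` are injective. -/
def GSetFree {C : Type u} [Category.{v} C] (T : C ⥤ Type w) : Prop :=
  ∀ ⦃c c' : C⦄ (x : T.obj c), Function.Injective fun g : c ⟶ c' => T.map g x

/-- The relation on `Σ c, T c` whose quotient is the colimit of `T` in `Type`. -/
def ColimRel {C : Type u} [Category.{v} C] (T : C ⥤ Type w) :
    (Σ c : C, T.obj c) → (Σ c : C, T.obj c) → Prop :=
  fun x y => ∃ g : x.1 ⟶ y.1, T.map g x.2 = y.2

/-- Finiteness for a `Type`-valued functor: its colimit in `Type` is a finite set. -/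
def GSetFinite {C : Type u} [Category.{v} C] (T : C ⥤ Type w) : Prop :=
  Finite (Quot (ColimRel T))

/-- A functor is a *finite weak cover* if each of its homotopy fibers (structured-arrow
categories) is thin and has finitely many connected components. -/
def FiniteWeakCover {K : Type u₃} {C : Type u₄} [Category.{v₃} K] [Category.{v₄} C]
    (m : K ⥤ C) : Prop :=
  ∀ c : C, Quiver.IsThin (StructuredArrow c m) ∧
    Finite (ConnectedComponents (StructuredArrow c m))

section Correspondence

variable {G : Type u₁} {H : Type u₂} {K : Type u₃}
  [Groupoid.{v₁} G] [Groupoid.{v₂} H] [Groupoid.{v₃} K]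

/-- The relation on `Σ κ, Hom_G(p κ, γ) × Hom_H(η, q κ)` generated by
`(g ∘ p(k), h) ~ (g, q(k) ∘ h)`; its quotient is the coend `X(η, γ)` attached to the
correspondence `H ⟵q K ⟶p G`. -/
def CorrRel (p : K ⥤ G) (q : K ⥤ H) (η : H) (γ : G) :
    (Σ κ : K, (p.obj κ ⟶ γ) × (η ⟶ q.obj κ)) →
      (Σ κ : K, (p.obj κ ⟶ γ) × (η ⟶ q.obj κ)) → Prop :=
  fun a b => ∃ k : a.1 ⟶ b.1, a.2.1 = p.map k ≫ b.2.1 ∧ b.2.2 = a.2.2 ≫ q.map k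

/-- The `G`-set `γ ↦ X(η, γ)` attached to a correspondence `H ⟵q K ⟶p G` of groupoids:
`X(η, γ)` is the coend over `K` of `κ ↦ Hom_G(p κ, γ) × Hom_H(η, q κ)`, and `g' : γ ⟶ γ'`
acts by postcomposition on the `G`-factor. -/
def corrGSet (p : K ⥤ G) (q : K ⥤ H) (η : H) : G ⥤ Type (max u₃ v₁ v₂) where
  obj γ := Quot (CorrRel p q η γ)
  map {γ γ'} g' :=
    TypeCat.ofHom (Quot.map
      (fun a => (⟨a.1, (a.2.1 ≫ g', a.2.2)⟩ : Σ κ : K, (p.obj κ ⟶ γ') × (η ⟶ q.obj κ)))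
      (by
        rintro ⟨κ, g, h⟩ ⟨κ', g₂, h₂⟩ ⟨k, hg, hh⟩
        exact ⟨k, by dsimp at *; rw [hg, Category.assoc], hh⟩) :
      Quot (CorrRel p q η γ) → Quot (CorrRel p q η γ'))
  map_id γ := by
    ext z
    induction z using Quot.ind with
    | _ a => simp; rfl
  map_comp f g := by
    ext z
    induction z using Quot.ind with
    | _ a => simp [Quot.map]

lemma corrRel_equivalence (p : K ⥤ G) (q : K ⥤ H) (η : H) (γ : G) :
    Equivalence (CorrRel p q η γ) := by
  constructor
  · intro a; exact ⟨𝟙 a.1, by simp, by simp⟩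
  · rintro a b ⟨k, h1, h2⟩
    refine ⟨Groupoid.inv k, ?_, ?_⟩
    · rw [h1]; simp
    · rw [h2]; simp
  · rintro a b c ⟨k, h1, h2⟩ ⟨k', h1', h2'⟩
    exact ⟨k ≫ k', by rw [h1, h1']; simp, by rw [h2', h2]; simp⟩

/-- In the structured-arrow category over a functor out of a groupoid, zigzag-connected
objects are connected by a single morphism. -/
lemma zigzag_to_hom {q : K ⥤ H} {η : H} {A B : StructuredArrow η q} (hz : Zigzag A B) :
    Nonempty (A ⟶ B) := by
  induction hz with
  | refl => exact ⟨𝟙 _⟩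
  | tail _ hzag ih =>
      obtain ⟨f⟩ := ih
      cases hzag with
      | inl h => obtain ⟨g⟩ := h; exact ⟨f ≫ g⟩
      | inr h =>
          obtain ⟨g⟩ := h
          refine ⟨f ≫ StructuredArrow.homMk (Groupoid.inv g.right) ?_⟩
          rw [← StructuredArrow.w g]
          simp

/-- The map sending a representative `(κ, g, h)` of `X(η, γ)` to the connected component of
`(κ, h)` in the homotopy fiber of `q` over `η`. -/
def corrComp (p : K ⥤ G) (q : K ⥤ H) (η : H) {γ : G} :
    Quot (CorrRel p q η γ) → ConnectedComponents (StructuredArrow η q) :=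
  Quot.lift
    (fun a => (Quotient.mk _ (StructuredArrow.mk a.2.2) :
        ConnectedComponents (StructuredArrow η q)))
    (by
      rintro a b ⟨k, h1, h2⟩
      exact Quotient.sound (Zigzag.of_hom (StructuredArrow.homMk k (by dsimp; rw [← h2]))))

lemma corrComp_map (p : K ⥤ G) (q : K ⥤ H) (η : H) {γ γ' : G} (g : γ ⟶ γ')
    (z : Quot (CorrRel p q η γ)) :
    corrComp p q η ((corrGSet p q η).map g z) = corrComp p q η z := by
  induction z using Quot.ind with
  | _ a => exact rfl

/-- If `q : K ⥤ H` is a finite weak cover, then for every `η` the `G`-set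
`γ ↦ X(η, γ) = ∫^κ Hom_G(p κ, γ) × Hom_H(η, q κ)` is free and finite. -/
theorem corrGSet_free_and_finite (p : K ⥤ G) (q : K ⥤ H) (hq : FiniteWeakCover q) (η : H) :
    GSetFree (corrGSet p q η) ∧ GSetFinite (corrGSet p q η) := by
  constructor
  · -- freeness
    intro γ γ' x
    induction x using Quot.ind with
    | _ a =>
      obtain ⟨κ, g, h⟩ := a
      intro g₁ g₂ hg
      have hrel : CorrRel p q η γ' ⟨κ, (g ≫ g₁, h)⟩ ⟨κ, (g ≫ g₂, h)⟩ :=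
        ((corrRel_equivalence p q η γ').eqvGen_iff).mp (Quot.eqvGen_exact (r := CorrRel p q η γ') (a := ⟨κ, (g ≫ g₁, h)⟩) (b := ⟨κ, (g ≫ g₂, h)⟩) hg)
      obtain ⟨k, h1, h2⟩ := hrel
      dsimp at k h1 h2
      have hk : k = 𝟙 κ := by
        have hsub := (hq η).1 (StructuredArrow.mk h) (StructuredArrow.mk h)
        have heq : StructuredArrow.homMk (f := StructuredArrow.mk h)
            (f' := StructuredArrow.mk h) k (by simpa using h2.symm) =
            StructuredArrow.homMk (𝟙 κ) (by simp) := hsub.elim _ _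
        have := congrArg CommaMorphism.right heq
        simpa using this
      rw [hk] at h1
      simp only [CategoryTheory.Functor.map_id, Category.id_comp] at h1
      exact (cancel_epi g).mp h1
  · -- finiteness
    have : Finite (ConnectedComponents (StructuredArrow η q)) := (hq η).2
    set φ : Quot (ColimRel (corrGSet p q η)) → ConnectedComponents (StructuredArrow η q) :=
      Quot.lift (fun x => corrComp p q η x.2)
        (by
          rintro ⟨γ, z⟩ ⟨γ', z'⟩ ⟨g, hg⟩
          dsimp at hg ⊢
          rw [← hg]; exact (corrComp_map p q η g z).symm) with hφ
    refine Finite.of_injective φ ?_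
    intro x y hxy
    obtain ⟨⟨γ, z⟩⟩ := x
    obtain ⟨⟨γ', z'⟩⟩ := y
    obtain ⟨⟨κ, g, h⟩⟩ := z
    obtain ⟨⟨κ', g', h'⟩⟩ := z'
    have hz : Zigzag (StructuredArrow.mk h : StructuredArrow η q)
        (StructuredArrow.mk h' : StructuredArrow η q) :=
      Quotient.exact hxy
    obtain ⟨f⟩ := zigzag_to_hom hz
    have hw : h ≫ q.map f.right = h' := by simpa using StructuredArrow.w f
    apply Quot.sound
    refine ⟨Groupoid.inv g ≫ p.map f.right ≫ g', ?_⟩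
    dsimp [corrGSet]
    apply Quot.sound
    exact ⟨f.right, by simp, hw.symm⟩

end Correspondence
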